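/- Let n ≥ 3 and k ≥ 0 be integers and let L > 1 be a real number. A real number σ has the property that there exist real numbers a, b, not both zero, such that the function u(r) = a·r^k + b·r^{2−n−k} satisfies u′(L) = 0 and u′(1) = −σ·u(1), if and only if σ = k·(n+k−2)·(L^{n+2k−2} − 1)/(k·L^{n+2k−2} + (n+k−2)). -/

import Mathlib

/-- Characterization of the mixed Steklov–Neumann eigenvalues on the annulus
`B_L \ B̄_1 ⊂ ℝⁿ`: a real number `σ` admits a nonzero radial part
`u(r) = a·r^k + b·r^(2−n−k)` with `u′(L) = 0` and `u′(1) = −σ·u(1)` iff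
`σ = k·(n+k−2)·(L^(n+2k−2) − 1) / (k·L^(n+2k−2) + (n+k−2))`. -/
theorem stmt_1 (n k : ℕ) (hn : 3 ≤ n) (L : ℝ) (hL : 1 < L) (σ : ℝ) :
    (∃ a b : ℝ, ¬ (a = 0 ∧ b = 0) ∧
      deriv (fun r : ℝ => a * r ^ (k : ℤ) + b * r ^ ((2 : ℤ) - n - k)) L = 0 ∧
      deriv (fun r : ℝ => a * r ^ (k : ℤ) + b * r ^ ((2 : ℤ) - n - k)) 1 =
        -σ * (a * (1 : ℝ) ^ (k : ℤ) + b * (1 : ℝ) ^ ((2 : ℤ) - n - k))) ↔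
    σ = (k : ℝ) * ((n : ℝ) + k - 2) * (L ^ ((n : ℤ) + 2 * k - 2) - 1) /
        ((k : ℝ) * L ^ ((n : ℤ) + 2 * k - 2) + ((n : ℝ) + k - 2)) := by
  have hL0 : (0:ℝ) < L := by linarith
  have hL0' : L ≠ 0 := ne_of_gt hL0
  have hN : (3:ℝ) ≤ (n:ℝ) := by exact_mod_cast hn
  have hK : (0:ℝ) ≤ (k:ℝ) := Nat.cast_nonneg k
  set t : ℝ := L ^ ((n : ℤ) + 2 * k - 2) with ht_def
  have ht : 0 < t := zpow_pos hL0 _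
  have hden : (k:ℝ) * t + ((n:ℝ) + k - 2) ≠ 0 := by
    nlinarith [mul_nonneg hK ht.le]
  have hsplit : L ^ ((k:ℤ) - 1) = L ^ ((2:ℤ) - n - k - 1) * t := by
    rw [ht_def, ← zpow_add₀ hL0']
    congr 1; ring
  have hderiv : ∀ a b x : ℝ, x ≠ 0 →
      deriv (fun r : ℝ => a * r ^ (k : ℤ) + b * r ^ ((2 : ℤ) - n - k)) x
        = a * ((k:ℝ) * x ^ ((k:ℤ) - 1))
          + b * (((2:ℝ) - n - k) * x ^ ((2:ℤ) - n - k - 1)) := by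
    intro a b x hx
    have h1 := (hasDerivAt_zpow (k:ℤ) x (Or.inl hx)).const_mul a
    have h2 := (hasDerivAt_zpow ((2:ℤ) - n - k) x (Or.inl hx)).const_mul b
    have h3 : HasDerivAt (fun r : ℝ => a * r ^ (k : ℤ) + b * r ^ ((2 : ℤ) - n - k)) _ x := h1.add h2; rw [h3.deriv]
    push_cast
    ring
  constructor
  · rintro ⟨a, b, hab, h1, h2⟩
    rw [hderiv a b L hL0', hsplit] at h1
    rw [hderiv a b 1 one_ne_zero] at h2
    simp only [one_zpow, mul_one] at h2
    have hP : L ^ ((2:ℤ) - n - k - 1) ≠ 0 := zpow_ne_zero _ hL0'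
    have h1' : (a * (k:ℝ) * t - b * ((n:ℝ) + k - 2)) * L ^ ((2:ℤ) - n - k - 1) = 0 := by
      linear_combination h1
    have hA : a * (k:ℝ) * t = b * ((n:ℝ) + k - 2) := by
      rcases mul_eq_zero.mp h1' with h | h
      · linarith [sub_eq_zero.mp h]
      · exact absurd h hP
    by_cases hk : k = 0
    · subst hk
      simp only [Nat.cast_zero, mul_zero, zero_mul, zero_add] at hA h2 ⊢
      have hb : b = 0 := by
        have : b * ((n:ℝ) - 2) = 0 := by linarith
        rcases mul_eq_zero.mp this with h | h
        · exact h
        · nlinarith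
      have ha : a ≠ 0 := fun h => hab ⟨h, hb⟩
      have : σ * a = 0 := by rw [hb] at h2; linarith
      rcases mul_eq_zero.mp this with h | h
      · simp [h]
      · exact absurd h ha
    · have hKpos : (0:ℝ) < (k:ℝ) := by
        exact_mod_cast Nat.pos_of_ne_zero hk
      have ha : a ≠ 0 := by
        intro h
        apply hab
        refine ⟨h, ?_⟩
        rw [h] at hA
        simp only [zero_mul] at hA
        rcases mul_eq_zero.mp hA.symm with hb | hb
        · exact hb
        · nlinarith
      rw [eq_div_iff hden]
      have key : a * (σ * ((k:ℝ) * t + ((n:ℝ) + k - 2))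
          - (k:ℝ) * ((n:ℝ) + k - 2) * (t - 1)) = 0 := by
        linear_combination (((n:ℝ) + k - 2)) * h2 + (σ - ((n:ℝ) + k - 2)) * hA
      rcases mul_eq_zero.mp key with h | h
      · exact absurd h ha
      · linarith [sub_eq_zero.mp h]
  · intro hσ
    refine ⟨(n:ℝ) + k - 2, (k:ℝ) * t, ?_, ?_, ?_⟩
    · rintro ⟨h, -⟩
      nlinarith
    · rw [hderiv _ _ L hL0', hsplit]
      ring
    · rw [hderiv _ _ 1 one_ne_zero]
      simp only [one_zpow, mul_one]
      rw [hσ]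
      field_simp
      ring
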